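/- arXiv:1604.02392 — 3 statements merged into one kernel-verified Lean document; each statement's English description precedes it below -/
import Mathlib

section
/- Let F be a complex n×n matrix, let ω ∈ (0,1], and consider the two-step recursion x_{ℓ+1} = (2−ω) x_ℓ − (1−ω) x_{ℓ−1} − ω F (x_ℓ − x_{ℓ−1}) for ℓ ≥ 0. Then the sequence (x_ℓ) converges (to some limit in ℂⁿ) for every pair of initial conditions x_{−1}, x₀ ∈ ℂⁿ if and only if ρ(ω F − (1−ω) I) < 1, where I is the n×n identity matrix. -/
open Matrix Filter
open scoped Matrix.Norms.L2Operator

-- coordinate bound in Euclidean space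
lemma coord_norm_le {n : ℕ} (x : EuclideanSpace ℂ (Fin n)) (i : Fin n) : ‖x i‖ ≤ ‖x‖ := by
  rw [EuclideanSpace.norm_eq]
  rw [show ‖x i‖ = Real.sqrt (‖x i‖ ^ 2) from (Real.sqrt_sq (norm_nonneg _)).symm]
  exact Real.sqrt_le_sqrt (Finset.single_le_sum (f := fun j => ‖x j‖ ^ 2)
    (fun j _ => sq_nonneg _) (Finset.mem_univ i))

-- spectral radius of negation
lemma spectralRadius_neg {n : ℕ} (a : Matrix (Fin n) (Fin n) ℂ) :
    spectralRadius ℂ (-a) = spectralRadius ℂ a := by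
  simp only [spectralRadius, ← spectrum.neg_eq]
  apply le_antisymm
  · refine iSup₂_le fun k hk => ?_
    rw [Set.mem_neg] at hk
    calc (‖k‖₊ : ENNReal) = ‖-k‖₊ := by rw [nnnorm_neg]
    _ ≤ _ := le_iSup₂ (f := fun k (_ : k ∈ spectrum ℂ a) => (‖k‖₊ : ENNReal)) (-k) hk
  · refine iSup₂_le fun k hk => ?_
    have hk' : -k ∈ -spectrum ℂ a := Set.neg_mem_neg.mpr hk
    calc (‖k‖₊ : ENNReal) = ‖-k‖₊ := by rw [nnnorm_neg]
    _ ≤ _ := le_iSup₂ (f := fun k (_ : k ∈ -spectrum ℂ a) => (‖k‖₊ : ENNReal)) (-k) hk'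


lemma norm_pow_le_geom {n : ℕ} (M : Matrix (Fin n) (Fin n) ℂ)
    (h : spectralRadius ℂ M < 1) :
    ∃ r : NNReal, (r : ℝ) < 1 ∧ ∀ᶠ j : ℕ in atTop, ‖M ^ j‖ ≤ (r : ℝ) ^ j := by
  obtain ⟨r, hr1, hr2⟩ := ENNReal.lt_iff_exists_nnreal_btwn.mp h
  refine ⟨r, by exact_mod_cast hr2, ?_⟩
  have hg := spectrum.pow_nnnorm_pow_one_div_tendsto_nhds_spectralRadius M
  filter_upwards [hg.eventually_lt_const hr1, eventually_ge_atTop 1] with j hj hj1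
  have hjne : (j : ℝ) ≠ 0 := Nat.cast_ne_zero.mpr (by omega)
  have h2 := ENNReal.rpow_le_rpow hj.le (by positivity : (0:ℝ) ≤ (j : ℝ))
  rw [← ENNReal.rpow_mul, one_div, inv_mul_cancel₀ hjne, ENNReal.rpow_one,
    ENNReal.rpow_natCast, ← ENNReal.coe_pow, ENNReal.coe_le_coe] at h2
  exact_mod_cast h2

lemma summable_pow_mulVec {n : ℕ} (M : Matrix (Fin n) (Fin n) ℂ)
    (h : spectralRadius ℂ M < 1) (w : Fin n → ℂ) :
    Summable (fun j : ℕ => (M ^ j) *ᵥ w) := by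
  obtain ⟨r, hr2, hev2⟩ := norm_pow_le_geom M h
  set w' : EuclideanSpace ℂ (Fin n) := (EuclideanSpace.equiv (Fin n) ℂ).symm w with hw'
  have hbound : ∀ j : ℕ, ‖(M ^ j) *ᵥ w‖ ≤ ‖M ^ j‖ * ‖w'‖ := by
    intro j
    have hvec : ∀ i, ‖((M ^ j) *ᵥ w) i‖ ≤ ‖M ^ j‖ * ‖w'‖ := by
      intro i
      have h1 : ‖(EuclideanSpace.equiv (Fin n) ℂ).symm ((M ^ j) *ᵥ w)‖
          ≤ ‖M ^ j‖ * ‖w'‖ := Matrix.l2_opNorm_mulVec (M ^ j) w'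
      exact le_trans (coord_norm_le ((EuclideanSpace.equiv (Fin n) ℂ).symm ((M ^ j) *ᵥ w)) i) h1
    exact pi_norm_le_iff_of_nonneg (by positivity) |>.mpr hvec
  refine Summable.of_norm_bounded_eventually_nat (g := fun j => (r : ℝ) ^ j * ‖w'‖) ?_ ?_
  · exact (summable_geometric_of_lt_one r.coe_nonneg hr2).mul_right _
  · filter_upwards [hev2] with j hj
    exact le_trans (hbound j) (mul_le_mul_of_nonneg_right hj (norm_nonneg _))


lemma opNorm_le_sum_basis {n : ℕ} (T : EuclideanSpace ℂ (Fin n) →L[ℂ] EuclideanSpace ℂ (Fin n)) :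
    ‖T‖ ≤ ∑ i : Fin n, ‖T (EuclideanSpace.single i 1)‖ := by
  refine ContinuousLinearMap.opNorm_le_bound _ (Finset.sum_nonneg fun _ _ => norm_nonneg _) ?_
  intro v
  have hv : v = ∑ i : Fin n, v i • EuclideanSpace.single i (1 : ℂ) := by
    apply (EuclideanSpace.basisFun (Fin n) ℂ).toBasis.ext_elem
    intro i
    simp [EuclideanSpace.single_apply, Finset.sum_apply, PiLp.smul_apply]
  calc ‖T v‖ = ‖∑ i : Fin n, v i • T (EuclideanSpace.single i 1)‖ := by
        conv_lhs => rw [hv]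
        rw [map_sum]
        simp_rw [_root_.map_smul]
    _ ≤ ∑ i : Fin n, ‖v i • T (EuclideanSpace.single i 1)‖ := norm_sum_le _ _
    _ ≤ ∑ i : Fin n, ‖v‖ * ‖T (EuclideanSpace.single i 1)‖ := by
        refine Finset.sum_le_sum fun i _ => ?_
        rw [norm_smul]
        exact mul_le_mul_of_nonneg_right (coord_norm_le v i) (norm_nonneg _)
    _ = (∑ i : Fin n, ‖T (EuclideanSpace.single i 1)‖) * ‖v‖ := by
        rw [Finset.sum_mul]; exact Finset.sum_congr rfl fun i _ => mul_comm _ _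

lemma specRad_lt_one_of_tendsto {n : ℕ} (M : Matrix (Fin n) (Fin n) ℂ)
    (h : ∀ w : Fin n → ℂ, Tendsto (fun j : ℕ => (M ^ j) *ᵥ w) atTop (nhds 0)) :
    spectralRadius ℂ M < 1 := by
  rcases Nat.eq_zero_or_pos n with hn | hn
  · subst hn
    have hemp : spectrum ℂ M = ∅ := by
      ext k
      simp only [spectrum.mem_iff, Set.mem_empty_iff_false, iff_false, not_not]
      exact isUnit_of_subsingleton _
    simp [spectralRadius, hemp]
  -- pointwise convergence of images of basis vectors, in EuclideanSpace
  have hT : ∀ i : Fin n, Tendsto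
      (fun j : ℕ => (Matrix.toEuclideanCLM (𝕜 := ℂ) (M ^ j)) (EuclideanSpace.single i 1))
      atTop (nhds 0) := by
    intro i
    have h1 := h (Pi.single i 1)
    have h2 : Tendsto (fun j : ℕ => (EuclideanSpace.equiv (Fin n) ℂ).symm ((M ^ j) *ᵥ Pi.single i 1))
        atTop (nhds ((EuclideanSpace.equiv (Fin n) ℂ).symm 0)) :=
      ((EuclideanSpace.equiv (Fin n) ℂ).symm.continuous.tendsto _).comp h1
    rw [map_zero] at h2
    convert h2 using 2 with j
    rfl
  -- operator norms tend to 0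
  have hnorm : Tendsto (fun j : ℕ => ‖M ^ j‖) atTop (nhds 0) := by
    have hb : Tendsto (fun j : ℕ => ∑ i : Fin n,
        ‖(Matrix.toEuclideanCLM (𝕜 := ℂ) (M ^ j)) (EuclideanSpace.single i 1)‖) atTop (nhds 0) := by
      have := tendsto_finset_sum (Finset.univ : Finset (Fin n))
        (fun i _ => ((continuous_norm.tendsto _).comp (hT i)))
      simpa using this
    refine squeeze_zero (fun j => norm_nonneg _) (fun j => ?_) hb
    rw [Matrix.cstar_norm_def]
    exact opNorm_le_sum_basis _
  -- find a power with norm < 1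
  obtain ⟨j, hj, hj1⟩ := ((hnorm.eventually_lt_const one_pos).and (eventually_ge_atTop 1)).exists
  obtain ⟨k, rfl⟩ : ∃ k, j = k + 1 := ⟨j - 1, by omega⟩
  have key := spectrum.spectralRadius_le_pow_nnnorm_pow_one_div ℂ M k
  have hpos : (0 : ℝ) < 1 / (k + 1 : ℝ) := by positivity
  have h1 : ((‖M ^ (k + 1)‖₊ : ENNReal)) ^ (1 / ((k:ℝ) + 1)) < 1 := by
    apply ENNReal.rpow_lt_one _ hpos
    exact_mod_cast hj
  have h2 : ((‖(1 : Matrix (Fin n) (Fin n) ℂ)‖₊ : ENNReal)) ^ (1 / ((k:ℝ) + 1)) ≤ 1 := by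
    apply ENNReal.rpow_le_one _ hpos.le
    have : ‖(1 : Matrix (Fin n) (Fin n) ℂ)‖ ≤ 1 := by
      rw [Matrix.cstar_norm_def, _root_.map_one]
      exact ContinuousLinearMap.norm_id_le
    exact_mod_cast this
  calc spectralRadius ℂ M ≤ _ := key
    _ ≤ ((‖M ^ (k + 1)‖₊ : ENNReal)) ^ (1 / ((k:ℝ) + 1)) * 1 := by
        push_cast
        exact mul_le_mul_right (by push_cast at h2 ⊢; exact h2) _
    _ < 1 := by rw [mul_one]; push_cast; push_cast at h1; exact h1

/-- Zero-stability of the relaxed (ω-modified) two-step recursion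
`x_{ℓ+1} = (2−ω) x_ℓ − (1−ω) x_{ℓ−1} − ω F (x_ℓ − x_{ℓ−1})`: the sequence
converges for every pair of initial conditions iff the spectral radius of
`ω F − (1−ω) I` is `< 1`.  (Indices are shifted by one: `x 0` plays the role
of `x_{−1}` and `x 1` that of `x₀`.) -/
theorem relaxed_two_step_recursion_convergence_iff_spectralRadius_lt_one
    (n : ℕ) (F : Matrix (Fin n) (Fin n) ℂ) (ω : ℝ) (hω : ω ∈ Set.Ioc (0 : ℝ) 1) :
    (∀ x : ℕ → (Fin n → ℂ),
        (∀ ℓ : ℕ, x (ℓ + 2) = ((2 - ω : ℝ) : ℂ) • x (ℓ + 1) - ((1 - ω : ℝ) : ℂ) • x ℓ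
            - ((ω : ℝ) : ℂ) • F.mulVec (x (ℓ + 1) - x ℓ)) →
        ∃ l : Fin n → ℂ, Tendsto x atTop (nhds l)) ↔
    spectralRadius ℂ (((ω : ℝ) : ℂ) • F - ((1 - ω : ℝ) : ℂ) • (1 : Matrix (Fin n) (Fin n) ℂ)) < 1 := by
  set G : Matrix (Fin n) (Fin n) ℂ :=
    ((ω : ℝ) : ℂ) • F - ((1 - ω : ℝ) : ℂ) • (1 : Matrix (Fin n) (Fin n) ℂ) with hG
  set M : Matrix (Fin n) (Fin n) ℂ := -G with hM
  have hspec : spectralRadius ℂ M = spectralRadius ℂ G := spectralRadius_neg G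
  -- M *ᵥ d computation
  have hMd : ∀ d : Fin n → ℂ, M *ᵥ d = ((1 - ω : ℝ) : ℂ) • d - ((ω : ℝ) : ℂ) • (F *ᵥ d) := by
    intro d
    rw [hM, hG, neg_sub, sub_mulVec, smul_mulVec, smul_mulVec, one_mulVec]
  -- the recursion is equivalent to the first-order form
  have hrec : ∀ (x : ℕ → (Fin n → ℂ)) (ℓ : ℕ),
      (x (ℓ + 2) = ((2 - ω : ℝ) : ℂ) • x (ℓ + 1) - ((1 - ω : ℝ) : ℂ) • x ℓ
            - ((ω : ℝ) : ℂ) • F.mulVec (x (ℓ + 1) - x ℓ))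
      ↔ x (ℓ + 2) = x (ℓ + 1) + M *ᵥ (x (ℓ + 1) - x ℓ) := by
    intro x ℓ
    rw [hMd]
    constructor <;> intro hx <;> rw [hx]
    · have h2 : ((2 - ω : ℝ) : ℂ) = 1 + ((1 - ω : ℝ) : ℂ) := by push_cast; ring
      rw [h2]
      module
    · have h2 : ((2 - ω : ℝ) : ℂ) = 1 + ((1 - ω : ℝ) : ℂ) := by push_cast; ring
      rw [h2]
      module
  constructor
  · -- convergence for all data → spectral radius < 1
    intro hconv
    rw [← hspec]
    apply specRad_lt_one_of_tendsto
    intro w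
    set x : ℕ → (Fin n → ℂ) := fun m => ∑ j ∈ Finset.range m, (M ^ j) *ᵥ w with hx
    have hdiff : ∀ ℓ : ℕ, x (ℓ + 1) - x ℓ = (M ^ ℓ) *ᵥ w := by
      intro ℓ
      rw [hx]
      simp [Finset.sum_range_succ]
    have hxrec : ∀ ℓ : ℕ, x (ℓ + 2) = ((2 - ω : ℝ) : ℂ) • x (ℓ + 1) - ((1 - ω : ℝ) : ℂ) • x ℓ
            - ((ω : ℝ) : ℂ) • F.mulVec (x (ℓ + 1) - x ℓ) := by
      intro ℓ
      rw [hrec x ℓ, hdiff ℓ, mulVec_mulVec, ← pow_succ']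
      have : x (ℓ + 2) = x (ℓ + 1) + (M ^ (ℓ+1)) *ᵥ w := by
        rw [hx]; simp [Finset.sum_range_succ]
      rw [this]
    obtain ⟨l, hl⟩ := hconv x hxrec
    have h1 : Tendsto (fun m => x (m + 1) - x m) atTop (nhds (l - l)) :=
      ((hl.comp (tendsto_add_atTop_nat 1)).sub hl)
    rw [sub_self] at h1
    have : (fun m => x (m + 1) - x m) = fun m => (M ^ m) *ᵥ w := funext hdiff
    rwa [this] at h1
  · -- spectral radius < 1 → convergence
    intro hρ x hx
    have hρM : spectralRadius ℂ M < 1 := by rw [hspec]; exact hρ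
    set w : Fin n → ℂ := x 1 - x 0 with hw
    have hdiff : ∀ ℓ : ℕ, x (ℓ + 1) - x ℓ = (M ^ ℓ) *ᵥ w := by
      intro ℓ
      induction ℓ with
      | zero => simp [hw]
      | succ k ih =>
        have := (hrec x k).mp (hx k)
        rw [this, ih, add_sub_cancel_left, mulVec_mulVec, ← pow_succ']
    have hsum : ∀ m : ℕ, x m = x 0 + ∑ j ∈ Finset.range m, (M ^ j) *ᵥ w := by
      intro m
      induction m with
      | zero => simp
      | succ k ih =>
        have : x (k + 1) = x k + (M ^ k) *ᵥ w := by
          rw [← hdiff k]; abel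
        rw [this, ih, Finset.sum_range_succ]; abel
    have hS := summable_pow_mulVec M hρM w
    refine ⟨x 0 + ∑' j, (M ^ j) *ᵥ w, ?_⟩
    have ht := hS.hasSum.tendsto_sum_nat
    have : Tendsto (fun m => x 0 + ∑ j ∈ Finset.range m, (M ^ j) *ᵥ w) atTop
        (nhds (x 0 + ∑' j, (M ^ j) *ᵥ w)) := tendsto_const_nhds.add ht
    convert this using 1
    exact funext hsum
end

section
/- Let A ∈ ℝ^{n×n}, C ∈ ℝ^{p×n}, let Q ∈ ℝ^{n×n} and R ∈ ℝ^{p×p} be symmetric positive definite, and assume the pair (A, C) is observable. Define, for a symmetric positive semidefinite n×n matrix P, the Riccati map f(P) := A P Aᵀ − A P Cᵀ (R + C P Cᵀ)^{−1} C P Aᵀ + Q (note R + C P Cᵀ is positive definite, hence invertible). Then there exists a unique symmetric positive semidefinite matrix P* with f(P*) = P*; this P* is positive definite; and for every symmetric positive semidefinite initial matrix P₀, the iterates defined by P_{q+1} = f(P_q) converge to P* (entrywise) as q → ∞. -/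
open Matrix Filter

/-- A pair `(A, C)` is observable if `⋂_{k=0}^{n−1} ker (C A^k) = {0}`. -/
def ObservablePair {n p : ℕ} (A : Matrix (Fin n) (Fin n) ℝ)
    (C : Matrix (Fin p) (Fin n) ℝ) : Prop :=
  ∀ x : Fin n → ℝ, (∀ k < n, (C * A ^ k).mulVec x = 0) → x = 0

/-- The combined prediction–correction Riccati map of the discrete-time Kalman filter:
`f(P) = A P Aᵀ − A P Cᵀ (R + C P Cᵀ)⁻¹ C P Aᵀ + Q`. -/
noncomputable def riccatiMap {n p : ℕ} (A : Matrix (Fin n) (Fin n) ℝ)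
    (C : Matrix (Fin p) (Fin n) ℝ) (Q : Matrix (Fin n) (Fin n) ℝ)
    (R : Matrix (Fin p) (Fin p) ℝ) (P : Matrix (Fin n) (Fin n) ℝ) :
    Matrix (Fin n) (Fin n) ℝ :=
  A * P * Aᵀ - A * P * Cᵀ * (R + C * P * Cᵀ)⁻¹ * C * P * Aᵀ + Q

namespace Riccati

variable {m m' : ℕ}

lemma ctr (M : Matrix (Fin m) (Fin m') ℝ) : Mᴴ = Mᵀ :=
  conjTranspose_eq_transpose_of_trivial M

lemma symm_of_psd {M : Matrix (Fin m) (Fin m) ℝ} (h : M.PosSemidef) : Mᵀ = M := by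
  rw [← ctr]; exact h.1

lemma psd_smul {M : Matrix (Fin m) (Fin m) ℝ} (h : M.PosSemidef) {c : ℝ} (hc : 0 ≤ c) :
    (c • M).PosSemidef := by
  refine Matrix.PosSemidef.of_dotProduct_mulVec_nonneg ?_ fun x => ?_
  · unfold Matrix.IsHermitian
    rw [conjTranspose_smul, h.1]
    simp
  · rw [smul_mulVec, dotProduct_smul, smul_eq_mul]
    exact mul_nonneg hc (h.dotProduct_mulVec_nonneg x)

variable {n p : ℕ} (A : Matrix (Fin n) (Fin n) ℝ) (C : Matrix (Fin p) (Fin n) ℝ)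
  (Q : Matrix (Fin n) (Fin n) ℝ) (R : Matrix (Fin p) (Fin p) ℝ)

/-- innovation covariance -/
noncomputable def SS (P : Matrix (Fin n) (Fin n) ℝ) : Matrix (Fin p) (Fin p) ℝ :=
  R + C * P * Cᵀ

/-- Kalman gain -/
noncomputable def KK (P : Matrix (Fin n) (Fin n) ℝ) : Matrix (Fin n) (Fin p) ℝ :=
  A * P * Cᵀ * (SS C R P)⁻¹

/-- covariance of observer with gain `K` -/
noncomputable def gg (K : Matrix (Fin n) (Fin p) ℝ) (P : Matrix (Fin n) (Fin n) ℝ) :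
    Matrix (Fin n) (Fin n) ℝ :=
  (A - K * C) * P * (A - K * C)ᵀ + K * R * Kᵀ + Q

lemma psd_mul_psd {B : Matrix (Fin m') (Fin m) ℝ} {M : Matrix (Fin m) (Fin m) ℝ}
    (h : M.PosSemidef) : (B * M * Bᵀ).PosSemidef := by
  rw [← ctr]; exact h.mul_mul_conjTranspose_same B

lemma SS_posdef (hR : R.PosDef) {P : Matrix (Fin n) (Fin n) ℝ} (hP : P.PosSemidef) :
    (SS C R P).PosDef :=
  hR.add_posSemidef (psd_mul_psd hP)

lemma key_identity (hR : R.PosDef) {P : Matrix (Fin n) (Fin n) ℝ} (hP : P.PosSemidef)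
    (K : Matrix (Fin n) (Fin p) ℝ) :
    gg A C Q R K P = riccatiMap A C Q R P
      + (K - KK A C R P) * SS C R P * (K - KK A C R P)ᵀ := by
  have hSpd := SS_posdef C R hR hP
  have hSsymm : (SS C R P)ᵀ = SS C R P := symm_of_psd hSpd.posSemidef
  have hdet : IsUnit (SS C R P).det := hSpd.det_pos.ne'.isUnit
  set S := SS C R P with hSdef
  set T := S⁻¹ with hTdef
  have hST : S * T = 1 := mul_nonsing_inv S hdet
  have hTS : T * S = 1 := nonsing_inv_mul S hdet
  have hTsymm : Tᵀ = T := by rw [hTdef, transpose_nonsing_inv, hSsymm]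
  have hPsymm : Pᵀ = P := symm_of_psd hP
  set X := A * P * Cᵀ with hXdef
  have hXT : (C * P * Aᵀ) = Xᵀ := by
    rw [hXdef, transpose_mul, transpose_mul, transpose_transpose, hPsymm, Matrix.mul_assoc]
  have hKK : KK A C R P = X * T := rfl
  -- the square term
  have hsq : (K - X * T) * S * (K - X * T)ᵀ
      = K * S * Kᵀ - K * Xᵀ - X * Kᵀ + X * T * Xᵀ := by
    have h1 : X * T * S = X := by rw [Matrix.mul_assoc, hTS, Matrix.mul_one]
    have h2 : K * S * (T * Xᵀ) = K * Xᵀ := by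
      rw [Matrix.mul_assoc K S, ← Matrix.mul_assoc S T, hST, Matrix.one_mul]
    rw [transpose_sub, transpose_mul, hTsymm]
    simp only [Matrix.sub_mul, Matrix.mul_sub]
    rw [h1, h2, ← Matrix.mul_assoc X T]
    abel
  -- expansion of gg
  have hgg : gg A C Q R K P = A * P * Aᵀ - K * Xᵀ - X * Kᵀ + K * S * Kᵀ + Q := by
    rw [← hXT, hXdef, hSdef]
    unfold gg SS
    rw [transpose_sub, transpose_mul]
    simp only [Matrix.mul_add, Matrix.add_mul, Matrix.mul_sub, Matrix.sub_mul, Matrix.mul_assoc]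
    abel
  -- expansion of riccatiMap
  have hric : riccatiMap A C Q R P = A * P * Aᵀ - X * T * Xᵀ + Q := by
    rw [hXdef, hTdef, hSdef]
    unfold riccatiMap SS
    rw [transpose_mul, transpose_mul, transpose_transpose, hPsymm]
    simp only [Matrix.mul_assoc]
  rw [hKK, hsq, hgg, hric]
  abel

lemma f_eq_g (hR : R.PosDef) {P : Matrix (Fin n) (Fin n) ℝ} (hP : P.PosSemidef) :
    riccatiMap A C Q R P = gg A C Q R (KK A C R P) P := by
  rw [key_identity A C Q R hR hP]
  simp only [sub_self, Matrix.zero_mul, transpose_zero, Matrix.mul_zero, add_zero]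

lemma g_sub_f_psd (hR : R.PosDef) {P : Matrix (Fin n) (Fin n) ℝ} (hP : P.PosSemidef)
    (K : Matrix (Fin n) (Fin p) ℝ) :
    (gg A C Q R K P - riccatiMap A C Q R P).PosSemidef := by
  rw [key_identity A C Q R hR hP, add_sub_cancel_left]
  exact psd_mul_psd (SS_posdef C R hR hP).posSemidef

lemma gg_sub_Q_psd (hQ : Q.PosDef) (hR : R.PosDef) {P : Matrix (Fin n) (Fin n) ℝ}
    (hP : P.PosSemidef) (K : Matrix (Fin n) (Fin p) ℝ) :
    (gg A C Q R K P - Q).PosSemidef := by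
  unfold gg
  rw [add_sub_cancel_right]
  exact (psd_mul_psd hP).add (psd_mul_psd hR.posSemidef)

lemma f_sub_Q_psd (hQ : Q.PosDef) (hR : R.PosDef) {P : Matrix (Fin n) (Fin n) ℝ}
    (hP : P.PosSemidef) : (riccatiMap A C Q R P - Q).PosSemidef := by
  rw [f_eq_g A C Q R hR hP]
  exact gg_sub_Q_psd A C Q R hQ hR hP _

lemma f_posdef (hQ : Q.PosDef) (hR : R.PosDef) {P : Matrix (Fin n) (Fin n) ℝ}
    (hP : P.PosSemidef) : (riccatiMap A C Q R P).PosDef := by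
  have h := f_sub_Q_psd A C Q R hQ hR hP
  have : riccatiMap A C Q R P = Q + (riccatiMap A C Q R P - Q) := by abel
  rw [this]
  exact hQ.add_posSemidef h

lemma gg_mono (K : Matrix (Fin n) (Fin p) ℝ) {P P' : Matrix (Fin n) (Fin n) ℝ}
    (hle : (P' - P).PosSemidef) :
    gg A C Q R K P' - gg A C Q R K P = (A - K * C) * (P' - P) * (A - K * C)ᵀ := by
  unfold gg
  simp only [Matrix.mul_sub, Matrix.sub_mul]
  abel

lemma f_mono (hR : R.PosDef) {P P' : Matrix (Fin n) (Fin n) ℝ} (hP : P.PosSemidef)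
    (hP' : P'.PosSemidef) (hle : (P' - P).PosSemidef) :
    (riccatiMap A C Q R P' - riccatiMap A C Q R P).PosSemidef := by
  have h1 : riccatiMap A C Q R P' - riccatiMap A C Q R P
      = (gg A C Q R (KK A C R P') P' - gg A C Q R (KK A C R P') P)
        + (gg A C Q R (KK A C R P') P - riccatiMap A C Q R P) := by
    rw [← f_eq_g A C Q R hR hP']
    abel
  rw [h1, gg_mono A C Q R _ hle]
  exact (psd_mul_psd hle).add (g_sub_f_psd A C Q R hR hP _)

lemma gg_smul (K : Matrix (Fin n) (Fin p) ℝ) (P : Matrix (Fin n) (Fin n) ℝ) (c : ℝ) :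
    gg A C Q R K (c • P) = c • gg A C Q R K P + (1 - c) • (K * R * Kᵀ + Q) := by
  unfold gg
  rw [Matrix.mul_smul, Matrix.smul_mul]
  rw [sub_smul, one_smul]
  simp only [smul_add]
  abel

lemma f_smul_lower (hR : R.PosDef) {P : Matrix (Fin n) (Fin n) ℝ} (hP : P.PosSemidef)
    {s : ℝ} (hs0 : 0 ≤ s) (hs1 : s ≤ 1) :
    (riccatiMap A C Q R (s • P) - (s • riccatiMap A C Q R P + (1 - s) • Q)).PosSemidef := by
  set K := KK A C R (s • P) with hK
  have hsP : (s • P).PosSemidef := psd_smul hP hs0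
  have h1 : riccatiMap A C Q R (s • P) = gg A C Q R K (s • P) := f_eq_g A C Q R hR hsP
  have h2 : riccatiMap A C Q R (s • P) - (s • riccatiMap A C Q R P + (1 - s) • Q)
      = s • (gg A C Q R K P - riccatiMap A C Q R P) + (1 - s) • (K * R * Kᵀ) := by
    rw [h1, gg_smul]
    simp only [smul_sub, smul_add]
    abel
  rw [h2]
  exact (psd_smul (g_sub_f_psd A C Q R hR hP K) hs0).add
    (psd_smul (psd_mul_psd hR.posSemidef) (by linarith))

lemma f_smul_upper (hR : R.PosDef) {P : Matrix (Fin n) (Fin n) ℝ} (hP : P.PosSemidef)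
    {t : ℝ} (ht : 1 ≤ t) :
    (t • riccatiMap A C Q R P - (t - 1) • Q - riccatiMap A C Q R (t • P)).PosSemidef := by
  set K := KK A C R P with hK
  have htP : (t • P).PosSemidef := psd_smul hP (by linarith)
  have h1 : riccatiMap A C Q R P = gg A C Q R K P := f_eq_g A C Q R hR hP
  have h2 : t • riccatiMap A C Q R P - (t - 1) • Q - riccatiMap A C Q R (t • P)
      = (gg A C Q R K (t • P) - riccatiMap A C Q R (t • P)) + (t - 1) • (K * R * Kᵀ) := by
    rw [gg_smul, h1]
    module
  rw [h2]
  exact (g_sub_f_psd A C Q R hR htP K).add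
    (psd_smul (psd_mul_psd hR.posSemidef) (by linarith))



/-- One step of deadbeat observer design: there is a gain `K` such that for every `x` in the
subspace `M`, `(A - K C) x = A m` for some `m ∈ M` with `C m = 0`. -/
lemma deadbeat_step (M : Submodule ℝ (Fin n → ℝ)) :
    ∃ K : Matrix (Fin n) (Fin p) ℝ, ∀ x ∈ M, ∃ m ∈ M,
      C.mulVec m = 0 ∧ (A - K * C).mulVec x = A.mulVec m := by
  classical
  set f : M →ₗ[ℝ] (Fin p → ℝ) := C.mulVecLin.comp M.subtype with hf
  obtain ⟨σ, hσ⟩ := f.rangeRestrict.exists_rightInverse_of_surjective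
    (LinearMap.range_eq_top.2 f.surjective_rangeRestrict)
  set K₀ : LinearMap.range f →ₗ[ℝ] (Fin n → ℝ) :=
    A.mulVecLin.comp ((M.subtype).comp σ) with hK₀
  obtain ⟨Khat, hKhat⟩ := K₀.exists_extend
  refine ⟨LinearMap.toMatrix' Khat, fun x hx => ?_⟩
  have hzmem : C.mulVec x ∈ LinearMap.range f := ⟨⟨x, hx⟩, by simp [hf]⟩
  set z : LinearMap.range f := ⟨C.mulVec x, hzmem⟩ with hz
  have hfσ : f (σ z) = C.mulVec x := by
    have := congrArg (fun g => (g z : Fin p → ℝ)) hσ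
    simpa [LinearMap.comp_apply, LinearMap.rangeRestrict] using this
  have hCσ : C.mulVec ((σ z : M) : Fin n → ℝ) = C.mulVec x := by
    simpa [hf, LinearMap.comp_apply, mulVecLin_apply] using hfσ
  refine ⟨x - ((σ z : M) : Fin n → ℝ), sub_mem hx (σ z).2, ?_, ?_⟩
  · rw [Matrix.mulVec_sub, hCσ, sub_self]
  · have hKC : (LinearMap.toMatrix' Khat).mulVec (C.mulVec x)
        = A.mulVec ((σ z : M) : Fin n → ℝ) := by
      have h1 : (LinearMap.toMatrix' Khat).mulVec (C.mulVec x) = Khat (C.mulVec x) := by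
        rw [← Matrix.toLin'_apply, Matrix.toLin'_toMatrix']
      have h2 : Khat (C.mulVec x) = K₀ z := by
        have := congrArg (fun g => (g z : Fin n → ℝ)) hKhat
        simpa [LinearMap.comp_apply, hz] using this
      rw [h1, h2, hK₀]
      simp [LinearMap.comp_apply, mulVecLin_apply]
    rw [Matrix.sub_mulVec, Matrix.mulVec_sub, ← Matrix.mulVec_mulVec, hKC]

/-- The decreasing chain of subspaces for deadbeat observer design. -/
def chain : ℕ → Submodule ℝ (Fin n → ℝ)
  | 0 => ⊤
  | (j+1) => ((chain j) ⊓ LinearMap.ker C.mulVecLin).map A.mulVecLin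

lemma chain_le (j : ℕ) : ∀ y ∈ chain A C j,
    ∃ x : Fin n → ℝ, (∀ k < j, (C * A ^ k).mulVec x = 0) ∧ y = (A ^ j).mulVec x := by
  induction j with
  | zero => exact fun y _ => ⟨y, by simp, by simp [Matrix.one_mulVec]⟩
  | succ j ih =>
      rintro y ⟨m, ⟨hmM, hmK⟩, rfl⟩
      obtain ⟨x, hx, rfl⟩ := ih m hmM
      have hCm : C.mulVec ((A ^ j).mulVec x) = 0 := by
        simpa [mulVecLin_apply] using hmK
      refine ⟨x, fun k hk => ?_, ?_⟩
      · rcases Nat.lt_succ_iff_lt_or_eq.1 hk with hk' | rfl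
        · exact hx k hk'
        · rw [← Matrix.mulVec_mulVec]
          exact hCm
      · rw [mulVecLin_apply, Matrix.mulVec_mulVec, ← pow_succ']
lemma deadbeat (hobs : ObservablePair A C) :
    ∃ K : ℕ → Matrix (Fin n) (Fin p) ℝ,
      ∃ Φ : ℕ → Matrix (Fin n) (Fin n) ℝ, Φ 0 = 1 ∧
        (∀ j, Φ (j+1) = (A - K j * C) * Φ j) ∧ Φ n = 0 := by
  classical
  choose K hK using fun j => deadbeat_step A C (chain A C j)
  set Φ : ℕ → Matrix (Fin n) (Fin n) ℝ := fun j =>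
    Nat.rec 1 (fun j M => (A - K j * C) * M) j with hΦ
  refine ⟨K, Φ, rfl, fun j => rfl, ?_⟩
  have hmem : ∀ j, ∀ v : Fin n → ℝ, (Φ j).mulVec v ∈ chain A C j := by
    intro j
    induction j with
    | zero => intro v; simp [chain]
    | succ j ih =>
        intro v
        have hstep := hK j ((Φ j).mulVec v) (ih v)
        obtain ⟨m, hmM, hmC, hval⟩ := hstep
        have : (Φ (j+1)).mulVec v = A.mulVec m := by
          show ((A - K j * C) * Φ j).mulVec v = A.mulVec m
          rw [← Matrix.mulVec_mulVec, hval]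
        rw [this]
        exact ⟨m, ⟨hmM, by simpa [mulVecLin_apply] using hmC⟩, by simp [mulVecLin_apply]⟩
  have hzero : ∀ v : Fin n → ℝ, (Φ n).mulVec v = 0 := by
    intro v
    obtain ⟨x, hx, hy⟩ := chain_le A C n ((Φ n).mulVec v) (hmem n v)
    rw [hy, hobs x hx, Matrix.mulVec_zero]
  ext i j
  have := congrFun (hzero (Pi.single j 1)) i
  rw [Matrix.mulVec_single] at this
  simpa using this



variable {m : ℕ}

lemma herm_of_symm {M : Matrix (Fin m) (Fin m) ℝ} (h : Mᵀ = M) : M.IsHermitian := by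
  rwa [Matrix.IsHermitian, conjTranspose_eq_transpose_of_trivial]

lemma quad_nonneg {M : Matrix (Fin m) (Fin m) ℝ} (h : M.PosSemidef) (x : Fin m → ℝ) :
    0 ≤ x ⬝ᵥ M *ᵥ x := by
  simpa [star_trivial] using h.dotProduct_mulVec_nonneg x

lemma quad_expand_add (M : Matrix (Fin m) (Fin m) ℝ) (x y : Fin m → ℝ) :
    (x + y) ⬝ᵥ M *ᵥ (x + y) = x ⬝ᵥ M *ᵥ x + x ⬝ᵥ M *ᵥ y + y ⬝ᵥ M *ᵥ x + y ⬝ᵥ M *ᵥ y := by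
  simp [Matrix.mulVec_add, dotProduct_add, add_dotProduct]
  ring

lemma quad_expand_sub (M : Matrix (Fin m) (Fin m) ℝ) (x y : Fin m → ℝ) :
    (x - y) ⬝ᵥ M *ᵥ (x - y) = x ⬝ᵥ M *ᵥ x - x ⬝ᵥ M *ᵥ y - y ⬝ᵥ M *ᵥ x + y ⬝ᵥ M *ᵥ y := by
  simp [Matrix.mulVec_sub, dotProduct_sub, sub_dotProduct]
  ring

lemma dot_single (M : Matrix (Fin m) (Fin m) ℝ) (i j : Fin m) :
    Pi.single i (1:ℝ) ⬝ᵥ M *ᵥ Pi.single j (1:ℝ) = M i j := by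
  simp [Matrix.mulVec_single, single_dotProduct]

lemma symm_entry {M : Matrix (Fin m) (Fin m) ℝ} (h : Mᵀ = M) (i j : Fin m) :
    M j i = M i j := by
  conv_lhs => rw [← h]
  rfl

lemma psd_diag_nonneg {M : Matrix (Fin m) (Fin m) ℝ} (h : M.PosSemidef) (i : Fin m) :
    0 ≤ M i i := by
  have := quad_nonneg h (Pi.single i 1)
  rwa [dot_single] at this

lemma psd_entry_abs_le {D : Matrix (Fin m) (Fin m) ℝ} (hD : D.PosSemidef) (i j : Fin m) :
    |D i j| ≤ (D i i + D j j) / 2 := by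
  have hsymm : Dᵀ = D := by
    rw [← conjTranspose_eq_transpose_of_trivial]; exact hD.1
  have hji : D j i = D i j := symm_entry hsymm i j
  have h1 := quad_nonneg hD (Pi.single i 1 + Pi.single j 1)
  have h2 := quad_nonneg hD (Pi.single i 1 - Pi.single j 1)
  rw [quad_expand_add] at h1
  rw [quad_expand_sub] at h2
  simp only [dot_single] at h1 h2
  rw [abs_le]
  constructor <;> linarith

lemma sandwich_entry {D W : Matrix (Fin m) (Fin m) ℝ} (hW : W.PosSemidef)
    (hDsymm : Dᵀ = D) {a b : ℝ} (ha : 0 ≤ a) (hb : 0 ≤ b)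
    (h1 : (b • W - D).PosSemidef) (h2 : (D + a • W).PosSemidef) (i j : Fin m) :
    |D i j| ≤ (a + b) * (W i i + W j j) := by
  have hWsymm : Wᵀ = W := by
    rw [← conjTranspose_eq_transpose_of_trivial]; exact hW.1
  have hDji : D j i = D i j := symm_entry hDsymm i j
  have hWji : W j i = W i j := symm_entry hWsymm i j
  have hWii := psd_diag_nonneg hW i
  have hWjj := psd_diag_nonneg hW j
  have hWij := psd_entry_abs_le hW i j
  rw [abs_le] at hWij
  -- quadratic form inequalities
  have key : ∀ v : Fin m → ℝ, v ⬝ᵥ D *ᵥ v ≤ b * (v ⬝ᵥ W *ᵥ v) ∧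
      -(a * (v ⬝ᵥ W *ᵥ v)) ≤ v ⬝ᵥ D *ᵥ v := by
    intro v
    have k1 := quad_nonneg h1 v
    have k2 := quad_nonneg h2 v
    rw [Matrix.sub_mulVec, dotProduct_sub, smul_mulVec, dotProduct_smul,
      smul_eq_mul] at k1
    rw [Matrix.add_mulVec, dotProduct_add, smul_mulVec, dotProduct_smul,
      smul_eq_mul] at k2
    constructor <;> linarith
  have kp := key (Pi.single i 1 + Pi.single j 1)
  have km := key (Pi.single i 1 - Pi.single j 1)
  have ki := key (Pi.single i 1)
  have kj := key (Pi.single j 1)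
  rw [quad_expand_add, quad_expand_add] at kp
  rw [quad_expand_sub, quad_expand_sub] at km
  simp only [dot_single] at kp km ki kj
  obtain ⟨kp1, kp2⟩ := kp
  obtain ⟨km1, km2⟩ := km
  obtain ⟨ki1, ki2⟩ := ki
  obtain ⟨kj1, kj2⟩ := kj
  rw [abs_le]
  constructor <;> nlinarith [hWij.1, hWij.2]

lemma exists_eps {Y X : Matrix (Fin m) (Fin m) ℝ} (hY : Y.PosDef) (hX : X.PosSemidef) :
    ∃ ε : ℝ, 0 < ε ∧ ε ≤ 1 ∧ (Y - ε • X).PosSemidef := by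
  have hYsymm : Yᵀ = Y := by
    rw [← conjTranspose_eq_transpose_of_trivial]; exact hY.1
  have hXsymm : Xᵀ = X := by
    rw [← conjTranspose_eq_transpose_of_trivial]; exact hX.1
  rcases Nat.eq_zero_or_pos m with hm | hm
  · refine ⟨1, one_pos, le_refl 1, Matrix.PosSemidef.of_dotProduct_mulVec_nonneg (herm_of_symm ?_) fun x => ?_⟩
    · ext i j
      exact absurd i.isLt (by omega)
    · have : (Finset.univ : Finset (Fin m)) = ∅ := by
        apply Finset.univ_eq_empty_iff.2
        rw [hm]
        exact Fin.isEmpty'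
      simp [dotProduct, this]
  · haveI : Nonempty (Fin m) := ⟨⟨0, hm⟩⟩
    set φ : (Fin m → ℝ) → ℝ := fun x => x ⬝ᵥ Y *ᵥ x with hφ
    set ψ : (Fin m → ℝ) → ℝ := fun x => x ⬝ᵥ X *ᵥ x with hψ
    have contquad : ∀ M : Matrix (Fin m) (Fin m) ℝ, Continuous (fun x : Fin m → ℝ => x ⬝ᵥ M *ᵥ x) := by
      intro M
      have : (fun x : Fin m → ℝ => x ⬝ᵥ M *ᵥ x)
          = fun x => ∑ i, x i * ∑ j, M i j * x j := by
        funext x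
        simp [dotProduct, Matrix.mulVec]
      rw [this]
      exact continuous_finset_sum _ fun i _ => (continuous_apply i).mul
        (continuous_finset_sum _ fun j _ => continuous_const.mul (continuous_apply j))
    have hcomp : IsCompact (Metric.sphere (0 : Fin m → ℝ) 1) := isCompact_sphere 0 1
    have hne : (Metric.sphere (0 : Fin m → ℝ) 1).Nonempty :=
      NormedSpace.sphere_nonempty.mpr zero_le_one
    obtain ⟨xm, hxm, hmin⟩ := hcomp.exists_isMinOn hne ((contquad Y).continuousOn)
    obtain ⟨xM, hxM, hmax⟩ := hcomp.exists_isMaxOn hne ((contquad X).continuousOn)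
    have hxm0 : xm ≠ 0 := by
      intro h
      rw [h] at hxm
      simp at hxm
    have hφm : 0 < φ xm := by
      have := hY.dotProduct_mulVec_pos hxm0
      simpa [star_trivial, hφ] using this
    have hψM : 0 ≤ ψ xM := quad_nonneg hX xM
    set ε : ℝ := min 1 (φ xm / (ψ xM + 1)) with hε
    refine ⟨ε, ?_, min_le_left _ _, ?_⟩
    · exact lt_min one_pos (div_pos hφm (by linarith))
    · refine Matrix.PosSemidef.of_dotProduct_mulVec_nonneg (herm_of_symm ?_) fun x => ?_
      · rw [transpose_sub, transpose_smul, hYsymm, hXsymm]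
      · rw [star_trivial, Matrix.sub_mulVec, dotProduct_sub, smul_mulVec,
          dotProduct_smul, smul_eq_mul, sub_nonneg]
        rcases eq_or_ne x 0 with rfl | hx0
        · simp
        · set c : ℝ := ‖x‖ with hc
          have hc0 : 0 < c := norm_pos_iff.2 hx0
          set u : Fin m → ℝ := c⁻¹ • x with hu
          have husph : u ∈ Metric.sphere (0 : Fin m → ℝ) 1 := by
            simp only [mem_sphere_iff_norm, sub_zero, hu, norm_smul, norm_inv, norm_norm]
            rw [Real.norm_eq_abs, abs_of_pos hc0, inv_mul_cancel₀ (ne_of_gt hc0)]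
          have hxcu : x = c • u := by
            rw [hu, smul_smul, mul_inv_cancel₀ (ne_of_gt hc0), one_smul]
          have hquadscale : ∀ M : Matrix (Fin m) (Fin m) ℝ,
              x ⬝ᵥ M *ᵥ x = c^2 * (u ⬝ᵥ M *ᵥ u) := by
            intro M
            rw [hxcu, smul_dotProduct, Matrix.mulVec_smul, dotProduct_smul]
            simp [smul_eq_mul]
            ring
          have h1 : φ xm ≤ u ⬝ᵥ Y *ᵥ u := hmin husph
          have h2 : u ⬝ᵥ X *ᵥ u ≤ ψ xM := hmax husph
          have h3 : 0 ≤ u ⬝ᵥ X *ᵥ u := quad_nonneg hX u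
          have hεle : ε ≤ φ xm / (ψ xM + 1) := min_le_right _ _
          have hε0 : 0 < ε := lt_min one_pos (div_pos hφm (by linarith))
          rw [hquadscale X, hquadscale Y]
          have hkey : ε * (u ⬝ᵥ X *ᵥ u) ≤ u ⬝ᵥ Y *ᵥ u := by
            have hd : φ xm / (ψ xM + 1) * (ψ xM + 1) = φ xm := by
              field_simp
            nlinarith [hεle, h1, h2, h3, hφm]
          nlinarith [sq_nonneg c, hkey, h3, hε0.le, mul_le_mul_of_nonneg_left hkey (sq_nonneg c)]


section Bound

variable {n p : ℕ} (A : Matrix (Fin n) (Fin n) ℝ) (C : Matrix (Fin p) (Fin n) ℝ)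
  (Q : Matrix (Fin n) (Fin n) ℝ) (R : Matrix (Fin p) (Fin p) ℝ)

lemma gg_psd (hQ : Q.PosDef) (hR : R.PosDef) {P : Matrix (Fin n) (Fin n) ℝ}
    (hP : P.PosSemidef) (K : Matrix (Fin n) (Fin p) ℝ) : (gg A C Q R K P).PosSemidef := by
  unfold gg
  exact ((psd_mul_psd hP).add (psd_mul_psd hR.posSemidef)).add hQ.posSemidef

lemma iter_psd (hQ : Q.PosDef) (hR : R.PosDef) {P : Matrix (Fin n) (Fin n) ℝ}
    (hP : P.PosSemidef) : ∀ q, ((riccatiMap A C Q R)^[q] P).PosSemidef := by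
  intro q
  induction q with
  | zero => exact hP
  | succ q ih =>
      rw [Function.iterate_succ_apply']
      exact (f_posdef A C Q R hQ hR ih).posSemidef

lemma gg_add (K : Matrix (Fin n) (Fin p) ℝ) (X Y : Matrix (Fin n) (Fin n) ℝ) :
    gg A C Q R K (X + Y) = (A - K * C) * X * (A - K * C)ᵀ + gg A C Q R K Y := by
  unfold gg
  rw [Matrix.mul_add, Matrix.add_mul]
  abel

lemma uniform_bound (hQ : Q.PosDef) (hR : R.PosDef) (hobs : ObservablePair A C) :
    ∃ B : Matrix (Fin n) (Fin n) ℝ, B.PosSemidef ∧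
      ∀ P : Matrix (Fin n) (Fin n) ℝ, P.PosSemidef → ∀ q, n ≤ q →
        (B - (riccatiMap A C Q R)^[q] P).PosSemidef := by
  obtain ⟨K, Φ, hΦ0, hΦs, hΦn⟩ := deadbeat A C hobs
  set Bs : ℕ → Matrix (Fin n) (Fin n) ℝ :=
    fun j => Nat.rec 0 (fun j X => gg A C Q R (K j) X) j with hBs
  have hBss : ∀ j, Bs (j+1) = gg A C Q R (K j) (Bs j) := fun j => rfl
  have hBpsd : ∀ j, (Bs j).PosSemidef := by
    intro j
    induction j with
    | zero => exact Matrix.PosSemidef.zero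
    | succ j ih => rw [hBss]; exact gg_psd A C Q R hQ hR ih (K j)
  have main : ∀ P : Matrix (Fin n) (Fin n) ℝ, P.PosSemidef → ∀ j,
      (Φ j * P * (Φ j)ᵀ + Bs j - (riccatiMap A C Q R)^[j] P).PosSemidef := by
    intro P hP j
    induction j with
    | zero =>
        have : Φ 0 * P * (Φ 0)ᵀ + Bs 0 - (riccatiMap A C Q R)^[0] P = 0 := by
          rw [hΦ0, show Bs 0 = (0 : Matrix (Fin n) (Fin n) ℝ) from rfl]
          simp
        rw [this]
        exact Matrix.PosSemidef.zero
    | succ j ih =>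
        have hFj := iter_psd A C Q R hQ hR hP j
        have hGj : (Φ j * P * (Φ j)ᵀ + Bs j).PosSemidef := (psd_mul_psd hP).add (hBpsd j)
        have h1 := g_sub_f_psd A C Q R hR hFj (K j)
        have h2 := gg_mono A C Q R (K j) (P := (riccatiMap A C Q R)^[j] P)
          (P' := Φ j * P * (Φ j)ᵀ + Bs j) ih
        have h3 : gg A C Q R (K j) (Φ j * P * (Φ j)ᵀ + Bs j)
            = Φ (j+1) * P * (Φ (j+1))ᵀ + Bs (j+1) := by
          rw [gg_add, hBss, hΦs j, transpose_mul]
          simp only [Matrix.mul_assoc]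
        have heq : Φ (j+1) * P * (Φ (j+1))ᵀ + Bs (j+1) - (riccatiMap A C Q R)^[j+1] P
            = (gg A C Q R (K j) (Φ j * P * (Φ j)ᵀ + Bs j)
                - gg A C Q R (K j) ((riccatiMap A C Q R)^[j] P))
              + (gg A C Q R (K j) ((riccatiMap A C Q R)^[j] P)
                - riccatiMap A C Q R ((riccatiMap A C Q R)^[j] P)) := by
          rw [h3, Function.iterate_succ_apply']
          abel
        rw [heq, h2]
        exact (psd_mul_psd ih).add h1
  refine ⟨Bs n, hBpsd n, fun P hP q hq => ?_⟩
  have hsplit : (riccatiMap A C Q R)^[q] P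
      = (riccatiMap A C Q R)^[n] ((riccatiMap A C Q R)^[q - n] P) := by
    rw [← Function.iterate_add_apply]
    congr 1
    omega
  have := main ((riccatiMap A C Q R)^[q - n] P) (iter_psd A C Q R hQ hR hP _) n
  rw [hΦn] at this
  simpa [hsplit] using this

end Bound

section Limits

variable {m : ℕ}

lemma tendsto_entries_quad {P : ℕ → Matrix (Fin m) (Fin m) ℝ} {Ps : Matrix (Fin m) (Fin m) ℝ}
    (h : ∀ i j, Tendsto (fun q => P q i j) atTop (nhds (Ps i j))) (x y : Fin m → ℝ) :
    Tendsto (fun q => x ⬝ᵥ (P q) *ᵥ y) atTop (nhds (x ⬝ᵥ Ps *ᵥ y)) := by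
  have hrw : ∀ M : Matrix (Fin m) (Fin m) ℝ, x ⬝ᵥ M *ᵥ y = ∑ i, x i * ∑ j, M i j * y j := by
    intro M
    simp [dotProduct, Matrix.mulVec]
  simp only [hrw]
  exact tendsto_finset_sum _ fun i _ => ((tendsto_finset_sum _ fun j _ =>
    (h i j).mul_const (y j)).const_mul (x i))

lemma psd_limit {P : ℕ → Matrix (Fin m) (Fin m) ℝ} {Ps : Matrix (Fin m) (Fin m) ℝ}
    (hpsd : ∀ q, (P q).PosSemidef)
    (h : ∀ i j, Tendsto (fun q => P q i j) atTop (nhds (Ps i j))) : Ps.PosSemidef := by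
  refine Matrix.PosSemidef.of_dotProduct_mulVec_nonneg (herm_of_symm ?_) fun x => ?_
  · ext i j
    rw [transpose_apply]
    refine tendsto_nhds_unique ?_ (h i j)
    have : (fun q => P q j i) = fun q => P q i j := by
      funext q
      exact symm_entry (symm_of_psd (hpsd q)) i j
    rw [← this]
    exact h j i
  · rw [star_trivial]
    exact ge_of_tendsto' (tendsto_entries_quad h x x) fun q => quad_nonneg (hpsd q) x

lemma continuousAt_mul' {α : Type*} [TopologicalSpace α] {a b c : ℕ}
    {f : α → Matrix (Fin a) (Fin b) ℝ} {g : α → Matrix (Fin b) (Fin c) ℝ} {x : α}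
    (hf : ContinuousAt f x) (hg : ContinuousAt g x) :
    ContinuousAt (fun y => f y * g y) x :=
  ContinuousAt.comp
    (g := fun q : Matrix (Fin a) (Fin b) ℝ × Matrix (Fin b) (Fin c) ℝ => q.1 * q.2)
    (f := fun y => (f y, g y))
    ((continuous_fst.matrix_mul continuous_snd).continuousAt) (hf.prodMk hg)

end Limits

section Cont

variable {n p : ℕ} (A : Matrix (Fin n) (Fin n) ℝ) (C : Matrix (Fin p) (Fin n) ℝ)
  (Q : Matrix (Fin n) (Fin n) ℝ) (R : Matrix (Fin p) (Fin p) ℝ)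

lemma f_continuousAt (hR : R.PosDef) {P : Matrix (Fin n) (Fin n) ℝ} (hP : P.PosSemidef) :
    ContinuousAt (riccatiMap A C Q R) P := by
  have hdet : (R + C * P * Cᵀ).det ≠ 0 := (SS_posdef C R hR hP).det_pos.ne'
  have hSmap : Continuous fun X : Matrix (Fin n) (Fin n) ℝ => R + C * X * Cᵀ :=
    continuous_const.add ((continuous_const.matrix_mul continuous_id).matrix_mul
      continuous_const)
  have hinv : ContinuousAt Inv.inv (R + C * P * Cᵀ) := by
    apply continuousAt_matrix_inv
    rw [show (Ring.inverse : ℝ → ℝ) = Inv.inv from Ring.inverse_eq_inv']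
    exact continuousAt_inv₀ hdet
  have hinvmap : ContinuousAt (fun X : Matrix (Fin n) (Fin n) ℝ => (R + C * X * Cᵀ)⁻¹) P :=
    ContinuousAt.comp (g := Inv.inv) (f := fun X : Matrix (Fin n) (Fin n) ℝ => R + C * X * Cᵀ)
      hinv hSmap.continuousAt
  have hid : ContinuousAt (fun X : Matrix (Fin n) (Fin n) ℝ => X) P := continuousAt_id
  have hc : ∀ {a b : ℕ} (M : Matrix (Fin a) (Fin b) ℝ),
      ContinuousAt (fun _ : Matrix (Fin n) (Fin n) ℝ => M) P := fun M => continuousAt_const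
  unfold riccatiMap
  exact ((continuousAt_mul' (continuousAt_mul' (hc A) hid) (hc Aᵀ)).sub
    (continuousAt_mul' (continuousAt_mul' (continuousAt_mul' (continuousAt_mul'
      (continuousAt_mul' (continuousAt_mul' (hc A) hid) (hc Cᵀ)) hinvmap) (hc C)) hid)
      (hc Aᵀ))).add (hc Q)

end Cont

section Exists

variable {n p : ℕ} (A : Matrix (Fin n) (Fin n) ℝ) (C : Matrix (Fin p) (Fin n) ℝ)
  (Q : Matrix (Fin n) (Fin n) ℝ) (R : Matrix (Fin p) (Fin p) ℝ)

lemma exists_fixed (hQ : Q.PosDef) (hR : R.PosDef) (hobs : ObservablePair A C) :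
    ∃ Pstar : Matrix (Fin n) (Fin n) ℝ, Pstar.PosSemidef ∧
      riccatiMap A C Q R Pstar = Pstar := by
  set f := riccatiMap A C Q R with hf
  set P : ℕ → Matrix (Fin n) (Fin n) ℝ := fun q => f^[q] (0 : Matrix (Fin n) (Fin n) ℝ)
    with hPdef
  have hpsd : ∀ q, (P q).PosSemidef := fun q =>
    iter_psd A C Q R hQ hR Matrix.PosSemidef.zero q
  have hmono1 : ∀ q, (P (q+1) - P q).PosSemidef := by
    intro q
    induction q with
    | zero =>
        have : P 1 - P 0 = f 0 := by
          show f^[1] 0 - f^[0] (0 : Matrix (Fin n) (Fin n) ℝ) = f 0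
          simp
        rw [this]
        exact (f_posdef A C Q R hQ hR Matrix.PosSemidef.zero).posSemidef
    | succ q ih =>
        have h1 : P (q+2) = f (P (q+1)) := Function.iterate_succ_apply' f (q+1) 0
        have h2 : P (q+1) = f (P q) := Function.iterate_succ_apply' f q 0
        rw [h1]
        nth_rewrite 2 [h2]
        exact f_mono A C Q R hR (hpsd q) (hpsd (q+1)) ih
  have hmono : ∀ q r, q ≤ r → (P r - P q).PosSemidef := by
    intro q r h
    induction r, h using Nat.le_induction with
    | base => rw [sub_self]; exact Matrix.PosSemidef.zero
    | succ r hqr ih =>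
        have : P (r+1) - P q = (P (r+1) - P r) + (P r - P q) := by abel
        rw [this]
        exact (hmono1 r).add ih
  obtain ⟨B, hB, hbound⟩ := uniform_bound A C Q R hQ hR hobs
  have hdiagbdd : ∀ i q, P q i i ≤ B i i := by
    intro i q
    have h1 := psd_diag_nonneg (hmono q (max q n) (le_max_left _ _)) i
    have h2 := psd_diag_nonneg
      (hbound 0 Matrix.PosSemidef.zero (max q n) (le_max_right _ _)) i
    rw [Matrix.sub_apply] at h1 h2
    have : P (max q n) i i = f^[max q n] (0 : Matrix (Fin n) (Fin n) ℝ) i i := rfl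
    linarith [this ▸ h2]
  have hdiagconv : ∀ i, ∃ L, Tendsto (fun q => P q i i) atTop (nhds L) := by
    intro i
    refine ⟨_, tendsto_atTop_ciSup (fun q r h => ?_) ⟨B i i, ?_⟩⟩
    · have := psd_diag_nonneg (hmono q r h) i
      rw [Matrix.sub_apply] at this
      linarith
    · rintro y ⟨q, rfl⟩
      exact hdiagbdd i q
  have hconv : ∀ i j, ∃ L, Tendsto (fun q => P q i j) atTop (nhds L) := by
    intro i j
    apply cauchySeq_tendsto_of_complete
    obtain ⟨Li, hLi⟩ := hdiagconv i
    obtain ⟨Lj, hLj⟩ := hdiagconv j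
    have hu : CauchySeq fun q => P q i i + P q j j := ((hLi.add hLj).cauchySeq)
    rw [Metric.cauchySeq_iff] at hu ⊢
    intro ε hε
    obtain ⟨N, hN⟩ := hu ε hε
    refine ⟨N, fun a ha b hb => ?_⟩
    have key : ∀ a b, b ≤ a → |P a i j - P b i j| ≤ |(P a i i + P a j j) - (P b i i + P b j j)| := by
      intro a b hba
      have hD := hmono b a hba
      have := psd_entry_abs_le hD i j
      rw [Matrix.sub_apply] at this
      have h1 := psd_diag_nonneg hD i
      have h2 := psd_diag_nonneg hD j
      rw [Matrix.sub_apply] at h1 h2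
      rw [Matrix.sub_apply, Matrix.sub_apply] at this
      rw [abs_le] at this ⊢
      constructor
      · have := this.1
        have hle := le_abs_self ((P a i i + P a j j) - (P b i i + P b j j))
        linarith
      · have := this.2
        have hle := le_abs_self ((P a i i + P a j j) - (P b i i + P b j j))
        linarith
    rcases le_total b a with hba | hab
    · have := key a b hba
      have hd := hN a ha b hb
      rw [Real.dist_eq] at hd ⊢
      linarith
    · have := key b a hab
      have hd := hN b hb a ha
      rw [Real.dist_eq] at hd ⊢
      rw [abs_sub_comm]
      linarith
  choose L hL using hconv
  set Pstar : Matrix (Fin n) (Fin n) ℝ := Matrix.of L with hPstar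
  have hLentry : ∀ i j, Tendsto (fun q => P q i j) atTop (nhds (Pstar i j)) := hL
  have hPspsd : Pstar.PosSemidef := psd_limit hpsd hLentry
  refine ⟨Pstar, hPspsd, ?_⟩
  have hPtend : Tendsto P atTop (nhds Pstar) := by
    exact tendsto_pi_nhds.2 fun i => tendsto_pi_nhds.2 fun j => hLentry i j
  have hcont : ContinuousAt f Pstar := f_continuousAt A C Q R hR hPspsd
  have h1 : Tendsto (fun q => f (P q)) atTop (nhds (f Pstar)) :=
    (hcont.tendsto).comp hPtend
  have h2 : Tendsto (fun q => f (P q)) atTop (nhds Pstar) := by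
    have : (fun q => f (P q)) = fun q => P (q+1) := by
      funext q
      exact (Function.iterate_succ_apply' f q 0).symm
    rw [this]
    exact (tendsto_add_atTop_iff_nat 1).2 hPtend
  exact tendsto_nhds_unique h1 h2

end Exists

section Attraction

variable {n p : ℕ} (A : Matrix (Fin n) (Fin n) ℝ) (C : Matrix (Fin p) (Fin n) ℝ)
  (Q : Matrix (Fin n) (Fin n) ℝ) (R : Matrix (Fin p) (Fin p) ℝ)

lemma attraction (hQ : Q.PosDef) (hR : R.PosDef) (hobs : ObservablePair A C)
    {Pstar : Matrix (Fin n) (Fin n) ℝ} (hPs : Pstar.PosSemidef)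
    (hfix : riccatiMap A C Q R Pstar = Pstar)
    {P₀ : Matrix (Fin n) (Fin n) ℝ} (hP₀ : P₀.PosSemidef) (i j : Fin n) :
    Tendsto (fun q => ((riccatiMap A C Q R)^[q] P₀) i j) atTop (nhds (Pstar i j)) := by
  obtain ⟨B, hB, hbound⟩ := uniform_bound A C Q R hQ hR hobs
  have hPsB : (B - Pstar).PosSemidef := by
    have hit : (riccatiMap A C Q R)^[n] Pstar = Pstar := Function.iterate_fixed hfix n
    have := hbound Pstar hPs n le_rfl
    rwa [hit] at this
  have hPsQ : (Pstar - Q).PosSemidef := by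
    have := f_sub_Q_psd A C Q R hQ hR hPs
    rwa [hfix] at this
  obtain ⟨ε, hε0, hε1, hQB⟩ := exists_eps hQ hB
  have h1ε : 1 ≤ 1/ε := by
    rw [le_div_iff₀ hε0]
    linarith
  have hQPs : (Q - ε • Pstar).PosSemidef := by
    have h := hQB.add (psd_smul hPsB hε0.le)
    have heq : Q - ε • B + ε • (B - Pstar) = Q - ε • Pstar := by module
    rwa [heq] at h
  have hBQ : ((1/ε) • Q - B).PosSemidef := by
    have h := psd_smul hQB (by positivity : (0:ℝ) ≤ 1/ε)
    have heq : (1/ε) • (Q - ε • B) = (1/ε) • Q - B := by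
      rw [smul_sub, smul_smul, one_div, inv_mul_cancel₀ hε0.ne', one_smul]
    rwa [heq] at h
  have hiterpsd : ∀ q, ((riccatiMap A C Q R)^[q] P₀).PosSemidef := fun q =>
    iter_psd A C Q R hQ hR hP₀ q
  -- step lemmas
  have step_lo : ∀ (X : Matrix (Fin n) (Fin n) ℝ) (s : ℝ), X.PosSemidef → 0 ≤ s → s ≤ 1 →
      (X - s • Pstar).PosSemidef →
      (riccatiMap A C Q R X - (s + (1-s)*ε) • Pstar).PosSemidef := by
    intro X s hX hs0 hs1 hXs
    have d1 := f_mono A C Q R hR (psd_smul hPs hs0) hX hXs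
    have d2 := f_smul_lower A C Q R hR hPs hs0 hs1
    rw [hfix] at d2
    have d3 := psd_smul hQPs (by linarith : (0:ℝ) ≤ 1 - s)
    have heq : (riccatiMap A C Q R X - riccatiMap A C Q R (s • Pstar))
        + (riccatiMap A C Q R (s • Pstar) - (s • Pstar + (1-s) • Q))
        + (1-s) • (Q - ε • Pstar)
        = riccatiMap A C Q R X - (s + (1-s)*ε) • Pstar := by module
    rw [← heq]
    exact (d1.add d2).add d3
  have step_hi : ∀ (X : Matrix (Fin n) (Fin n) ℝ) (t : ℝ), X.PosSemidef → 1 ≤ t →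
      (t • Pstar - X).PosSemidef →
      ((1 + (t-1)*(1-ε)) • Pstar - riccatiMap A C Q R X).PosSemidef := by
    intro X t hX ht hXt
    have d1 := f_mono A C Q R hR hX (psd_smul hPs (by linarith)) hXt
    have d2 := f_smul_upper A C Q R hR hPs ht
    rw [hfix] at d2
    have d3 := psd_smul hQPs (by linarith : (0:ℝ) ≤ t - 1)
    have heq : (t • Pstar - (t-1) • Q - riccatiMap A C Q R (t • Pstar))
        + (riccatiMap A C Q R (t • Pstar) - riccatiMap A C Q R X)
        + (t-1) • (Q - ε • Pstar)
        = (1 + (t-1)*(1-ε)) • Pstar - riccatiMap A C Q R X := by module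
    rw [← heq]
    exact (d2.add d1).add d3
  -- base case at index n+1
  have e2 : (B - (riccatiMap A C Q R)^[n+1] P₀).PosSemidef :=
    hbound P₀ hP₀ (n+1) (by omega)
  have e1 : ((riccatiMap A C Q R)^[n+1] P₀ - Q).PosSemidef := by
    rw [Function.iterate_succ_apply']
    exact f_sub_Q_psd A C Q R hQ hR (hiterpsd n)
  have base_lo : ((riccatiMap A C Q R)^[n+1] P₀ - ε • Pstar).PosSemidef := by
    have h := (e1.add hQB).add (psd_smul hPsB hε0.le)
    have heq : ((riccatiMap A C Q R)^[n+1] P₀ - Q) + (Q - ε • B) + ε • (B - Pstar)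
        = (riccatiMap A C Q R)^[n+1] P₀ - ε • Pstar := by module
    rwa [heq] at h
  have base_hi : ((1/ε) • Pstar - (riccatiMap A C Q R)^[n+1] P₀).PosSemidef := by
    have h := ((psd_smul hPsQ (by positivity : (0:ℝ) ≤ 1/ε)).add hBQ).add e2
    have heq : (1/ε) • (Pstar - Q) + ((1/ε) • Q - B) + (B - (riccatiMap A C Q R)^[n+1] P₀)
        = (1/ε) • Pstar - (riccatiMap A C Q R)^[n+1] P₀ := by module
    rwa [heq] at h
  -- the coefficients stay in the right ranges
  have hpow0 : ∀ q : ℕ, (0:ℝ) ≤ (1-ε)^q := fun q => pow_nonneg (by linarith) q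
  have hpow1 : ∀ q : ℕ, (1-ε)^q ≤ 1 := fun q => pow_le_one₀ (by linarith) (by linarith)
  -- main invariant
  have inv : ∀ q, ((riccatiMap A C Q R)^[n+1+q] P₀ - (1 - (1-ε)^(q+1)) • Pstar).PosSemidef ∧
      ((1 + (1/ε - 1)*(1-ε)^q) • Pstar - (riccatiMap A C Q R)^[n+1+q] P₀).PosSemidef := by
    intro q
    induction q with
    | zero =>
        constructor
        · have hc : 1 - (1-ε)^(0+1) = ε := by ring
          rw [show n+1+0 = n+1 from rfl, hc]
          exact base_lo
        · have hc : 1 + (1/ε - 1)*(1-ε)^0 = 1/ε := by ring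
          rw [show n+1+0 = n+1 from rfl, hc]
          exact base_hi
    | succ q ih =>
        have hidx : (riccatiMap A C Q R)^[n+1+(q+1)] P₀
            = riccatiMap A C Q R ((riccatiMap A C Q R)^[n+1+q] P₀) := by
          rw [show n+1+(q+1) = (n+1+q)+1 from rfl, Function.iterate_succ_apply']
        constructor
        · have h := step_lo ((riccatiMap A C Q R)^[n+1+q] P₀) (1 - (1-ε)^(q+1))
            (hiterpsd _) (by linarith [hpow1 (q+1)]) (by linarith [hpow0 (q+1)]) ih.1
          have hc : (1 - (1-ε)^(q+1)) + (1 - (1 - (1-ε)^(q+1)))*ε = 1 - (1-ε)^(q+1+1) := by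
            rw [pow_succ]
            ring
          rw [hc] at h
          rwa [hidx]
        · have h := step_hi ((riccatiMap A C Q R)^[n+1+q] P₀) (1 + (1/ε - 1)*(1-ε)^q)
            (hiterpsd _) (by nlinarith [hpow0 q]) ih.2
          have hc : 1 + ((1 + (1/ε - 1)*(1-ε)^q) - 1)*(1-ε) = 1 + (1/ε - 1)*(1-ε)^(q+1) := by
            rw [pow_succ]
            ring
          rw [hc] at h
          rwa [hidx]
  -- entrywise bound
  have habs : ∀ q, |((riccatiMap A C Q R)^[n+1+q] P₀ - Pstar) i j|
      ≤ ((1-ε)^(q+1) + (1/ε - 1)*(1-ε)^q) * (Pstar i i + Pstar j j) := by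
    intro q
    have hDsymm : ((riccatiMap A C Q R)^[n+1+q] P₀ - Pstar)ᵀ
        = (riccatiMap A C Q R)^[n+1+q] P₀ - Pstar := by
      rw [transpose_sub, symm_of_psd (hiterpsd _), symm_of_psd hPs]
    have hub : (((1/ε - 1)*(1-ε)^q) • Pstar
        - ((riccatiMap A C Q R)^[n+1+q] P₀ - Pstar)).PosSemidef := by
      have h := (inv q).2
      have heq : (1 + (1/ε - 1)*(1-ε)^q) • Pstar - (riccatiMap A C Q R)^[n+1+q] P₀
          = ((1/ε - 1)*(1-ε)^q) • Pstar - ((riccatiMap A C Q R)^[n+1+q] P₀ - Pstar) := by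
        module
      rwa [heq] at h
    have hlb : (((riccatiMap A C Q R)^[n+1+q] P₀ - Pstar)
        + ((1-ε)^(q+1)) • Pstar).PosSemidef := by
      have h := (inv q).1
      have heq : (riccatiMap A C Q R)^[n+1+q] P₀ - (1 - (1-ε)^(q+1)) • Pstar
          = ((riccatiMap A C Q R)^[n+1+q] P₀ - Pstar) + ((1-ε)^(q+1)) • Pstar := by
        module
      rwa [heq] at h
    have := sandwich_entry hPs hDsymm (hpow0 (q+1))
      (mul_nonneg (by linarith) (hpow0 q)) hub hlb i j
    linarith [this]
  have hgeo : Tendsto (fun q : ℕ => ((1-ε)^(q+1) + (1/ε - 1)*(1-ε)^q) * (Pstar i i + Pstar j j))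
      atTop (nhds 0) := by
    have hrw : (fun q : ℕ => ((1-ε)^(q+1) + (1/ε - 1)*(1-ε)^q) * (Pstar i i + Pstar j j))
        = fun q : ℕ => (((1-ε) + (1/ε - 1)) * (Pstar i i + Pstar j j)) * (1-ε)^q := by
      funext q
      rw [pow_succ]
      ring
    rw [hrw]
    simpa using (tendsto_pow_atTop_nhds_zero_of_lt_one (by linarith) (by linarith)).const_mul
      (((1-ε) + (1/ε - 1)) * (Pstar i i + Pstar j j))
  have hD0 : Tendsto (fun q => ((riccatiMap A C Q R)^[n+1+q] P₀ - Pstar) i j)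
      atTop (nhds 0) :=
    squeeze_zero_norm (fun q => by rw [Real.norm_eq_abs]; exact habs q) hgeo
  have hshift : Tendsto (fun q => ((riccatiMap A C Q R)^[n+1+q] P₀) i j)
      atTop (nhds (Pstar i j)) := by
    have h := hD0.add_const (Pstar i j)
    rw [zero_add] at h
    have hrw : (fun q => ((riccatiMap A C Q R)^[n+1+q] P₀ - Pstar) i j + Pstar i j)
        = fun q => ((riccatiMap A C Q R)^[n+1+q] P₀) i j := by
      funext q
      rw [Matrix.sub_apply]
      ring
    rwa [hrw] at h
  have hshift' : Tendsto (fun q => ((riccatiMap A C Q R)^[q + (n+1)] P₀) i j)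
      atTop (nhds (Pstar i j)) := by
    have hrw : (fun q => ((riccatiMap A C Q R)^[q + (n+1)] P₀) i j)
        = fun q => ((riccatiMap A C Q R)^[n+1+q] P₀) i j := by
      funext q
      rw [Nat.add_comm]
    rwa [hrw]
  exact (tendsto_add_atTop_iff_nat (n+1)).1 hshift'

end Attraction

end Riccati

/-- Existence, uniqueness, positive definiteness, and global attractivity of the
positive semidefinite fixed point of the Kalman filter Riccati iteration, under
observability of `(A, C)` and positive definiteness of `Q` and `R`. -/
theorem riccati_fixed_point_exists_unique_and_attractive
    {n p : ℕ} (A : Matrix (Fin n) (Fin n) ℝ) (C : Matrix (Fin p) (Fin n) ℝ)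
    (Q : Matrix (Fin n) (Fin n) ℝ) (R : Matrix (Fin p) (Fin p) ℝ)
    (hQ : Q.PosDef) (hR : R.PosDef) (hobs : ObservablePair A C) :
    ∃ Pstar : Matrix (Fin n) (Fin n) ℝ,
      Pstar.PosSemidef ∧ riccatiMap A C Q R Pstar = Pstar ∧ Pstar.PosDef ∧
      (∀ P' : Matrix (Fin n) (Fin n) ℝ,
        P'.PosSemidef → riccatiMap A C Q R P' = P' → P' = Pstar) ∧
      (∀ P₀ : Matrix (Fin n) (Fin n) ℝ, P₀.PosSemidef →
        ∀ i j, Tendsto (fun q : ℕ => ((riccatiMap A C Q R)^[q] P₀) i j)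
          atTop (nhds (Pstar i j))) := by
  obtain ⟨Pstar, hPs, hfix⟩ := Riccati.exists_fixed A C Q R hQ hR hobs
  have hPD : Pstar.PosDef := by
    rw [← hfix]
    exact Riccati.f_posdef A C Q R hQ hR hPs
  refine ⟨Pstar, hPs, hfix, hPD, ?_, ?_⟩
  · intro P' hP' hfix'
    ext i j
    have h1 := Riccati.attraction A C Q R hQ hR hobs hPs hfix hP' i j
    have h2 : (fun q => ((riccatiMap A C Q R)^[q] P') i j) = fun _ => P' i j := by
      funext q
      rw [Function.iterate_fixed hfix' q]
    rw [h2] at h1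
    exact tendsto_nhds_unique tendsto_const_nhds h1
  · intro P₀ hP₀ i j
    exact Riccati.attraction A C Q R hQ hR hobs hPs hfix hP₀ i j
end

section
/- Let M and (M_q)_{q≥0} be real n×n matrices such that the spectral radius of M is strictly less than 1 and ‖M_q − M‖ ≤ a r^q for all q, for some constants a > 0 and r ∈ (0,1). Then the time-varying linear recursion e_{q+1} = M_q e_q is exponentially stable: there exist K > 0 and λ ∈ (0,1) such that for every initial vector e₀ ∈ ℝⁿ and every q ≥ 0, ‖e_q‖ ≤ K λ^q ‖e₀‖. -/
open Matrix Filter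
open scoped NNReal ENNReal

attribute [local instance] Matrix.linftyOpNormedRing Matrix.linftyOpNormedAlgebra

private lemma gelfand_pow_bound {n : ℕ} (A : Matrix (Fin n) (Fin n) ℂ) (μ : ℝ≥0)
    (h : spectralRadius ℂ A < (μ : ℝ≥0∞)) : ∃ m : ℕ, 1 ≤ m ∧ ‖A ^ m‖₊ ≤ μ ^ m := by
  haveI : CompleteSpace (Matrix (Fin n) (Fin n) ℂ) := FiniteDimensional.complete ℂ _
  have hg := spectrum.pow_nnnorm_pow_one_div_tendsto_nhds_spectralRadius A
  have hev : ∀ᶠ k : ℕ in atTop, ((‖A ^ k‖₊ : ℝ≥0∞) ^ (1 / (k:ℝ))) < (μ : ℝ≥0∞) :=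
    hg.eventually_lt_const h
  obtain ⟨m, hm1, hm⟩ := (hev.and (eventually_ge_atTop 1)).exists
  refine ⟨m, hm, ?_⟩
  have hm0 : (m : ℝ) ≠ 0 := by positivity
  have h2 : ((‖A ^ m‖₊ : ℝ≥0∞) ^ (1 / (m:ℝ))) ^ (m : ℝ) ≤ (μ : ℝ≥0∞) ^ (m:ℝ) :=
    ENNReal.rpow_le_rpow hm1.le (by positivity)
  rw [← ENNReal.rpow_mul, one_div, inv_mul_cancel₀ hm0, ENNReal.rpow_one,
    ENNReal.rpow_natCast] at h2
  exact_mod_cast h2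

/-- If the matrices `M_q` converge exponentially (entrywise, i.e. in the
elementwise-sup matrix norm) to a matrix `M` whose spectral radius is `< 1`,
then the time-varying linear recursion `e_{q+1} = M_q e_q` is exponentially
stable. -/
theorem time_varying_recursion_exponentially_stable {n : ℕ}
    (M : Matrix (Fin n) (Fin n) ℝ) (Mq : ℕ → Matrix (Fin n) (Fin n) ℝ)
    (a r : ℝ) (ha : 0 < a) (hr : r ∈ Set.Ioo (0 : ℝ) 1)
    (hρ : spectralRadius ℂ (M.map (fun t : ℝ => (t : ℂ))) < 1)
    (hconv : ∀ q : ℕ, ∀ i j, |(Mq q - M) i j| ≤ a * r ^ q) :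
    ∃ K > (0 : ℝ), ∃ lam ∈ Set.Ioo (0 : ℝ) 1,
      ∀ e : ℕ → (Fin n → ℝ), (∀ q : ℕ, e (q + 1) = (Mq q).mulVec (e q)) →
        ∀ q : ℕ, ‖e q‖ ≤ K * lam ^ q * ‖e 0‖ := by
  obtain ⟨hr0, hr1⟩ := hr
  -- choose `ν ∈ ℝ≥0` with `spectralRadius < ν`, `r ≤ ν < 1`
  obtain ⟨u, hu1, hu2⟩ := ENNReal.lt_iff_exists_nnreal_btwn.mp hρ
  set ν : ℝ≥0 := max u ⟨r, hr0.le⟩ with hνdef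
  set μ : ℝ := (ν : ℝ) with hμdef
  have hμr : r ≤ μ := by
    have : (⟨r, hr0.le⟩ : ℝ≥0) ≤ ν := le_max_right _ _
    exact_mod_cast this
  have hμ0 : 0 < μ := lt_of_lt_of_le hr0 hμr
  have hμ1 : μ < 1 := by
    have hu1' : (u : ℝ) < 1 := by exact_mod_cast hu2
    have : μ = max (u : ℝ) r := by
      simp [hμdef, hνdef, NNReal.coe_max]
      exact NNReal.coe_max _ _
    rw [this]
    exact max_lt hu1' hr1
  have hρν : spectralRadius ℂ (M.map (fun t : ℝ => (t : ℂ))) < (ν : ℝ≥0∞) := by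
    refine hu1.trans_le ?_
    exact_mod_cast (le_max_left u _ : u ≤ ν)
  obtain ⟨m, hm1, hAm⟩ := gelfand_pow_bound _ ν hρν
  -- transfer the power bound to the real matrix
  have hMm : ‖M ^ m‖ ≤ μ ^ m := by
    have hmap : (M.map (fun t : ℝ => (t : ℂ))) ^ m = (M ^ m).map (fun t : ℝ => (t : ℂ)) := by
      have := map_pow (Complex.ofRealHom.mapMatrix) M m
      exact this.symm
    have hnrm : ‖(M ^ m).map (fun t : ℝ => (t : ℂ))‖₊ = ‖M ^ m‖₊ := by
      simp [Matrix.linfty_opNNNorm_def, Matrix.map_apply]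
    rw [hmap, hnrm] at hAm
    exact_mod_cast hAm
  -- entrywise convergence gives convergence in the L∞ operator norm
  set b : ℝ := n * a with hbdef
  have hb : 0 ≤ b := by positivity
  have hΔ : ∀ q, ‖Mq q - M‖ ≤ b * r ^ q := by
    intro q
    have key : ‖Mq q - M‖₊ ≤ ⟨b * r ^ q, by positivity⟩ := by
      rw [Matrix.linfty_opNNNorm_def]
      refine Finset.sup_le fun i _ => ?_
      have hterm : ∀ j, ‖(Mq q - M) i j‖₊ ≤ ⟨a * r ^ q, by positivity⟩ := by
        intro j
        have := hconv q i j
        apply NNReal.coe_le_coe.mp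
        show _ ≤ a * r ^ q
        simpa [Real.norm_eq_abs] using this
      calc (∑ j, ‖(Mq q - M) i j‖₊) ≤ ∑ _j : Fin n, (NNReal.mk (a * r ^ q) (by positivity) : ℝ≥0) :=
            Finset.sum_le_sum fun j _ => hterm j
        _ = (NNReal.mk (b * r ^ q) (by positivity) : ℝ≥0) := by
            apply NNReal.coe_injective
            simp only [Finset.sum_const, Finset.card_univ, Fintype.card_fin, nsmul_eq_mul]
            rw [NNReal.coe_mul]
            simp only [NNReal.coe_mk, NNReal.coe_natCast]
            have hn : ((n : ℝ≥0) : ℝ) = (n : ℝ) := NNReal.coe_natCast n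
            rw [hbdef]; ring
    calc ‖Mq q - M‖ = ((‖Mq q - M‖₊ : ℝ≥0) : ℝ) := rfl
      _ ≤ b * r ^ q := by exact_mod_cast key
  -- the Lyapunov functional
  set V : (Fin n → ℝ) → ℝ := fun x => ∑ k ∈ Finset.range m, (1/μ)^k * ‖(M^k).mulVec x‖ with hVdef
  have hVterm : ∀ (x : Fin n → ℝ) k, 0 ≤ (1/μ)^k * ‖(M^k).mulVec x‖ := by
    intro x k; positivity
  have hV0 : ∀ x, ‖x‖ ≤ V x := by
    intro x
    have h0 : ‖x‖ = (1/μ)^0 * ‖(M^0).mulVec x‖ := by simp [Matrix.one_mulVec]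
    rw [h0]
    exact Finset.single_le_sum (fun k _ => hVterm x k) (Finset.mem_range.mpr hm1)
  have hVnonneg : ∀ x, 0 ≤ V x := fun x => (norm_nonneg x).trans (hV0 x)
  set Cv : ℝ := 1 + ∑ k ∈ Finset.range m, (1/μ)^k * ‖M^k‖ with hCvdef
  have hCv1 : 1 ≤ Cv := by
    have : (0:ℝ) ≤ ∑ k ∈ Finset.range m, (1/μ)^k * ‖M^k‖ :=
      Finset.sum_nonneg fun k _ => by positivity
    rw [hCvdef]; linarith
  have hCv0 : 0 < Cv := lt_of_lt_of_le one_pos hCv1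
  have hCvx : ∀ x, V x ≤ Cv * ‖x‖ := by
    intro x
    have h1 : V x ≤ ∑ k ∈ Finset.range m, ((1/μ)^k * ‖M^k‖) * ‖x‖ := by
      refine Finset.sum_le_sum fun k _ => ?_
      rw [mul_assoc]
      exact mul_le_mul_of_nonneg_left (Matrix.linfty_opNorm_mulVec _ _) (by positivity)
    rw [← Finset.sum_mul] at h1
    refine h1.trans ?_
    have : ∑ k ∈ Finset.range m, (1/μ)^k * ‖M^k‖ ≤ Cv := by linarith
    exact mul_le_mul_of_nonneg_right this (norm_nonneg x)
  have hVadd : ∀ x y, V (x + y) ≤ V x + V y := by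
    intro x y
    rw [hVdef]
    simp only
    rw [← Finset.sum_add_distrib]
    refine Finset.sum_le_sum fun k _ => ?_
    rw [Matrix.mulVec_add, ← mul_add]
    exact mul_le_mul_of_nonneg_left (norm_add_le _ _) (by positivity)
  have hVM : ∀ x, V (M.mulVec x) ≤ μ * V x := by
    intro x
    set f : ℕ → ℝ := fun k => (1/μ)^k * ‖(M^k).mulVec x‖ with hfdef
    have key : V (M.mulVec x) = μ * ∑ k ∈ Finset.range m, f (k+1) := by
      rw [Finset.mul_sum]
      refine Finset.sum_congr rfl fun k _ => ?_
      have h1 : (M^k).mulVec (M.mulVec x) = (M^(k+1)).mulVec x := by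
        rw [Matrix.mulVec_mulVec, ← pow_succ]
      rw [h1, hfdef]
      simp only
      rw [pow_succ]
      field_simp
      ring_nf
      rw [mul_inv_cancel₀ hμ0.ne']; ring
    have hfm : f m ≤ ‖x‖ := by
      have h2 : ‖(M^m).mulVec x‖ ≤ μ^m * ‖x‖ :=
        (Matrix.linfty_opNorm_mulVec _ _).trans
          (mul_le_mul_of_nonneg_right hMm (norm_nonneg x))
      have : f m ≤ (1/μ)^m * (μ^m * ‖x‖) :=
        mul_le_mul_of_nonneg_left h2 (by positivity)
      refine this.trans (le_of_eq ?_)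
      field_simp
      rw [← mul_pow, one_div, inv_mul_cancel₀ hμ0.ne', one_pow, one_mul]
    have hf0 : f 0 = ‖x‖ := by simp [hfdef, Matrix.one_mulVec]
    have hsum : ∑ k ∈ Finset.range m, f (k+1) ≤ V x := by
      have e1 : ∑ k ∈ Finset.range (m+1), f k = (∑ k ∈ Finset.range m, f (k+1)) + f 0 :=
        Finset.sum_range_succ' f m
      have e2 : ∑ k ∈ Finset.range (m+1), f k = V x + f m := Finset.sum_range_succ f m
      rw [hf0] at e1
      linarith
    rw [key]
    exact mul_le_mul_of_nonneg_left hsum hμ0.le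
  -- constants
  set D : ℝ := Cv * b / μ with hDdef
  have hD0 : 0 ≤ D := by positivity
  have hμD : μ * D = Cv * b := by
    rw [hDdef]; field_simp
  set E : ℝ := Real.exp (D / (1 - r)) with hEdef
  have hE0 : 0 < E := Real.exp_pos _
  have h1r : 0 < 1 - r := by linarith
  have hprod : ∀ q, ∏ j ∈ Finset.range q, (1 + D * r^j) ≤ E := by
    intro q
    have hfac : ∀ j, (0:ℝ) ≤ 1 + D * r^j := fun j => by positivity
    have h1 : ∏ j ∈ Finset.range q, (1 + D * r^j) ≤
        ∏ j ∈ Finset.range q, Real.exp (D * r^j) := by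
      refine Finset.prod_le_prod (fun j _ => hfac j) fun j _ => ?_
      have := Real.add_one_le_exp (D * r^j)
      linarith
    have h2 : ∏ j ∈ Finset.range q, Real.exp (D * r^j) =
        Real.exp (∑ j ∈ Finset.range q, D * r^j) := (Real.exp_sum _ _).symm
    have h3 : ∑ j ∈ Finset.range q, D * r^j ≤ D / (1 - r) := by
      rw [← Finset.mul_sum]
      have hg : ∑ j ∈ Finset.range q, r^j ≤ 1 / (1 - r) := by
        rw [geom_sum_eq hr1.ne]
        have heq : (r^q - 1)/(r - 1) = (1 - r^q)/(1 - r) := by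
          rw [← neg_div_neg_eq]; ring_nf
        rw [heq, div_le_div_iff₀ h1r h1r]
        have : (0:ℝ) ≤ r^q := by positivity
        nlinarith
      calc D * ∑ j ∈ Finset.range q, r^j ≤ D * (1/(1-r)) :=
            mul_le_mul_of_nonneg_left hg hD0
        _ = D / (1 - r) := by ring
    calc ∏ j ∈ Finset.range q, (1 + D * r^j) ≤ Real.exp (∑ j ∈ Finset.range q, D * r^j) := by
          rw [← h2]; exact h1
      _ ≤ E := Real.exp_le_exp.mpr h3
  refine ⟨Cv * E, by positivity, μ, ⟨hμ0, hμ1⟩, ?_⟩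
  intro e he
  have hone : ∀ q, V (e (q+1)) ≤ (μ * (1 + D * r^q)) * V (e q) := by
    intro q
    have hMqeq : Mq q = M + (Mq q - M) := by abel
    have hsplit : e (q+1) = M.mulVec (e q) + (Mq q - M).mulVec (e q) := by
      rw [he q, hMqeq, Matrix.add_mulVec]
      simp [Matrix.add_mulVec, Matrix.sub_mulVec]
    have h1 : V (e (q+1)) ≤ V (M.mulVec (e q)) + V ((Mq q - M).mulVec (e q)) := by
      rw [hsplit]; exact hVadd _ _
    have h2 : V ((Mq q - M).mulVec (e q)) ≤ Cv * (b * r^q) * V (e q) := by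
      have ha1 : V ((Mq q - M).mulVec (e q)) ≤ Cv * ‖(Mq q - M).mulVec (e q)‖ := hCvx _
      have ha2 : ‖(Mq q - M).mulVec (e q)‖ ≤ (b * r^q) * ‖e q‖ :=
        (Matrix.linfty_opNorm_mulVec _ _).trans
          (mul_le_mul_of_nonneg_right (hΔ q) (norm_nonneg _))
      have ha3 : ‖e q‖ ≤ V (e q) := hV0 _
      calc V ((Mq q - M).mulVec (e q)) ≤ Cv * ((b * r^q) * ‖e q‖) :=
            ha1.trans (mul_le_mul_of_nonneg_left ha2 hCv0.le)
        _ ≤ Cv * ((b * r^q) * V (e q)) := by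
            refine mul_le_mul_of_nonneg_left ?_ hCv0.le
            exact mul_le_mul_of_nonneg_left ha3 (by positivity)
        _ = Cv * (b * r^q) * V (e q) := by ring
    have h3 : V (M.mulVec (e q)) ≤ μ * V (e q) := hVM _
    have heq : (μ * (1 + D * r^q)) * V (e q) = μ * V (e q) + Cv * (b * r^q) * V (e q) := by
      have : μ * (1 + D * r^q) = μ + (μ * D) * r^q := by ring
      rw [this, hμD]; ring
    rw [heq]
    linarith
  have hmain : ∀ q, V (e q) ≤ (μ^q * ∏ j ∈ Finset.range q, (1 + D * r^j)) * V (e 0) := by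
    intro q
    induction q with
    | zero => simp
    | succ q ih =>
      have hstep := hone q
      have hcoef : (0:ℝ) ≤ μ * (1 + D * r^q) := by positivity
      calc V (e (q+1)) ≤ (μ * (1 + D * r^q)) * V (e q) := hstep
        _ ≤ (μ * (1 + D * r^q)) * ((μ^q * ∏ j ∈ Finset.range q, (1 + D * r^j)) * V (e 0)) :=
            mul_le_mul_of_nonneg_left ih hcoef
        _ = (μ^(q+1) * ∏ j ∈ Finset.range (q+1), (1 + D * r^j)) * V (e 0) := by
            rw [Finset.prod_range_succ, pow_succ]; ring
  intro q
  have hfin : V (e q) ≤ (μ^q * E) * (Cv * ‖e 0‖) := by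
    refine (hmain q).trans ?_
    have hP0 : (0:ℝ) ≤ ∏ j ∈ Finset.range q, (1 + D * r^j) :=
      Finset.prod_nonneg fun j _ => by positivity
    have h1 : μ^q * ∏ j ∈ Finset.range q, (1 + D * r^j) ≤ μ^q * E :=
      mul_le_mul_of_nonneg_left (hprod q) (by positivity)
    exact mul_le_mul h1 (hCvx _) (hVnonneg _) (by positivity)
  calc ‖e q‖ ≤ V (e q) := hV0 _
    _ ≤ (μ^q * E) * (Cv * ‖e 0‖) := hfin
    _ = Cv * E * μ^q * ‖e 0‖ := by ring
end
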